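/- For a Gaussian disturbance and convex sets 𝒰, 𝒮, 𝒯, the open-loop reach-avoid probability U ↦ ℙ{Ā x_0 + H̄ U + Ḡ W ∈ 𝒮 × ⋯ × 𝒮 × 𝒯} is a log-concave function of U ∈ 𝒰^N; consequently its maximization over the convex set 𝒰^N is a log-concave (quasi-concave) optimization problem. -/

import Mathlib

open MeasureTheory Matrix Real

open MeasureTheory Set Pointwise Filter
open scoped ENNReal

section PLAux


lemma bm_compact {K L : Set ℝ} (hK : IsCompact K) (hL : IsCompact L)
    (hKne : K.Nonempty) (hLne : L.Nonempty) :
    volume K + volume L ≤ volume (K + L) := by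
  set a := sSup K with ha
  set b := sInf L with hb
  have haK : a ∈ K := hK.sSup_mem hKne
  have hbL : b ∈ L := hL.sInf_mem hLne
  set S1 : Set ℝ := a +ᵥ L with hS1
  set S2 : Set ℝ := b +ᵥ K with hS2
  have hS1im : S1 = (fun y => a + y) '' L := by
    rw [hS1, ← Set.image_vadd]; rfl
  have hS2im : S2 = (fun x => b + x) '' K := by
    rw [hS2, ← Set.image_vadd]; rfl
  have h1 : S1 ⊆ K + L := by
    rw [hS1im]; rintro _ ⟨y, hy, rfl⟩; exact Set.add_mem_add haK hy
  have h2 : S2 ⊆ K + L := by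
    rw [hS2im]; rintro _ ⟨x, hx, rfl⟩
    show b + x ∈ K + L
    rw [show b + x = x + b from add_comm _ _]; exact Set.add_mem_add hx hbL
  have hm2 : MeasurableSet S2 := by
    rw [hS2im]; exact (hK.image (continuous_add_left b)).measurableSet
  have hv1 : volume S1 = volume L := measure_vadd _ _ _
  have hv2 : volume S2 = volume K := measure_vadd _ _ _
  have hinter : S1 ∩ S2 ⊆ {a + b} := by
    rw [hS1im, hS2im]
    rintro z ⟨⟨y, hy, rfl⟩, ⟨x, hx, hxz⟩⟩
    have hb1 : b ≤ y := csInf_le hL.bddBelow hy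
    have ha1 : x ≤ a := le_csSup hK.bddAbove hx
    simp only [Set.mem_singleton_iff]
    simp only at hxz
    linarith
  have hint0 : volume (S1 ∩ S2) = 0 :=
    measure_mono_null hinter (by simp)
  have hkey := measure_union_add_inter (μ := volume) S1 hm2
  rw [hint0, add_zero] at hkey
  calc volume K + volume L = volume S1 + volume S2 := by rw [hv1, hv2, add_comm]
    _ = volume (S1 ∪ S2) := hkey.symm
    _ ≤ volume (K + L) := measure_mono (Set.union_subset h1 h2)

lemma bm_one_dim {A B : Set ℝ} (hA : MeasurableSet A) (hB : MeasurableSet B)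
    (hAne : A.Nonempty) (hBne : B.Nonempty) (hAfin : volume A ≠ ⊤) (hBfin : volume B ≠ ⊤) :
    volume A + volume B ≤ volume (A + B) := by
  refine ENNReal.le_of_forall_pos_le_add fun ε hε _ => ?_
  obtain ⟨K, hKA, hKc, hKv⟩ := hA.exists_isCompact_lt_add hAfin
    (ε := ε / 2) (by simpa using hε.ne')
  obtain ⟨L, hLB, hLc, hLv⟩ := hB.exists_isCompact_lt_add hBfin
    (ε := ε / 2) (by simpa using hε.ne')
  obtain ⟨x, hx⟩ := hAne
  obtain ⟨y, hy⟩ := hBne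
  have hKc' : IsCompact (K ∪ {x}) := hKc.union isCompact_singleton
  have hLc' : IsCompact (L ∪ {y}) := hLc.union isCompact_singleton
  have key := bm_compact hKc' hLc' (by simp) (by simp)
  have hsub : (K ∪ {x}) + (L ∪ {y}) ⊆ A + B :=
    Set.add_subset_add (Set.union_subset hKA (by simpa using hx))
      (Set.union_subset hLB (by simpa using hy))
  have h1 : volume A ≤ volume (K ∪ {x}) + ε / 2 :=
    le_trans hKv.le (add_le_add (measure_mono Set.subset_union_left) le_rfl)
  have h2 : volume B ≤ volume (L ∪ {y}) + ε / 2 :=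
    le_trans hLv.le (add_le_add (measure_mono Set.subset_union_left) le_rfl)
  calc volume A + volume B
      ≤ (volume (K ∪ {x}) + ε/2) + (volume (L ∪ {y}) + ε/2) := add_le_add h1 h2
    _ = (volume (K ∪ {x}) + volume (L ∪ {y})) + (ε/2 + ε/2) := by ring
    _ ≤ volume (A + B) + ε := by
        rw [ENNReal.add_halves]
        exact add_le_add (key.trans (measure_mono hsub)) le_rfl



lemma dim1_core {t : ℝ} (ht : 0 < t) (ht1 : t < 1)
    (F G : ℝ → ℝ) (hFm : Measurable F) (hGm : Measurable G)
    (hF0 : ∀ x, 0 ≤ F x) (hF1 : ∀ x, F x ≤ 1)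
    (hG0 : ∀ x, 0 ≤ G x) (hG1 : ∀ x, G x ≤ 1)
    (hFpos : ∀ s : ℝ, 0 < s → s < 1 → volume {x | s ≤ F x} ≠ 0)
    (hGpos : ∀ s : ℝ, 0 < s → s < 1 → volume {x | s ≤ G x} ≠ 0)
    (hFfin : ∀ s : ℝ, 0 < s → volume {x | s ≤ F x} ≠ ⊤)
    (hGfin : ∀ s : ℝ, 0 < s → volume {x | s ≤ G x} ≠ ⊤)
    (H : ℝ → ℝ≥0∞) (hHm : Measurable H)
    (hyp : ∀ x y : ℝ, ENNReal.ofReal (F x ^ t * G y ^ (1 - t)) ≤ H (t * x + (1 - t) * y)) :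
    ENNReal.ofReal t * (∫⁻ x, ENNReal.ofReal (F x)) +
      ENNReal.ofReal (1 - t) * (∫⁻ x, ENNReal.ofReal (G x)) ≤ ∫⁻ z, H z := by
  have ht1' : (0:ℝ) < 1 - t := by linarith
  set HR : ℝ → ℝ := fun z => (min (H z) 1).toReal with hHR
  have hHRm : Measurable HR := (hHm.min measurable_const).ennreal_toReal
  have hHR1 : ∀ z, HR z ≤ 1 := fun z => by
    simpa using ENNReal.toReal_mono (by simp) (min_le_right (H z) 1)
  -- layer cake identities
  have layerF := lintegral_eq_lintegral_meas_le volume (f := F)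
    (ae_of_all _ hF0) hFm.aemeasurable
  have layerG := lintegral_eq_lintegral_meas_le volume (f := G)
    (ae_of_all _ hG0) hGm.aemeasurable
  have layerH := lintegral_eq_lintegral_meas_le volume (f := HR)
    (ae_of_all _ fun z => ENNReal.toReal_nonneg) hHRm.aemeasurable
  -- ∫ H dominates ∫ ofReal HR
  have hHdom : ∫⁻ z, ENNReal.ofReal (HR z) ≤ ∫⁻ z, H z := by
    refine lintegral_mono fun z => ?_
    rw [hHR, ENNReal.ofReal_toReal (by simp : min (H z) 1 ≠ ⊤)]
    exact min_le_left _ _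
  -- key pointwise-in-s estimate
  have key : ∀ s ∈ Ioo (0:ℝ) 1,
      ENNReal.ofReal t * volume {x | s ≤ F x} + ENNReal.ofReal (1 - t) * volume {y | s ≤ G y}
        ≤ volume {z | s ≤ HR z} := by
    rintro s ⟨hs0, hs1⟩
    set A := {x | s ≤ F x} with hA
    set B := {y | s ≤ G y} with hB
    have hAmeas : MeasurableSet A := hFm measurableSet_Ici
    have hBmeas : MeasurableSet B := hGm measurableSet_Ici
    have hAne : A.Nonempty := nonempty_of_measure_ne_zero (hFpos s hs0 hs1)
    have hBne : B.Nonempty := nonempty_of_measure_ne_zero (hGpos s hs0 hs1)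
    have hvolA : volume (t • A) = ENNReal.ofReal t * volume A := by
      rw [Measure.addHaar_smul_of_nonneg volume ht.le A]
      simp
    have hvolB : volume ((1-t) • B) = ENNReal.ofReal (1-t) * volume B := by
      rw [Measure.addHaar_smul_of_nonneg volume ht1'.le B]
      simp
    have hsub : (t • A) + ((1-t) • B) ⊆ {z | s ≤ HR z} := by
      rintro _ ⟨u, ⟨x, hx, rfl⟩, v, ⟨y, hy, rfl⟩, rfl⟩
      simp only [smul_eq_mul, mem_setOf_eq]
      have hFG : s ≤ F x ^ t * G y ^ (1 - t) := by
        have h1 : s ^ t ≤ F x ^ t := Real.rpow_le_rpow hs0.le hx ht.le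
        have h2 : s ^ (1-t) ≤ G y ^ (1-t) := Real.rpow_le_rpow hs0.le hy ht1'.le
        have hss : s ^ t * s ^ (1 - t) = s := by
          rw [← Real.rpow_add hs0]; norm_num
        calc s = s ^ t * s ^ (1-t) := hss.symm
          _ ≤ F x ^ t * G y ^ (1-t) :=
            mul_le_mul h1 h2 (Real.rpow_nonneg hs0.le _) (Real.rpow_nonneg (hF0 x) _)
      have hH := (ENNReal.ofReal_le_ofReal hFG).trans (hyp x y)
      have hmin : ENNReal.ofReal s ≤ min (H (t * x + (1-t) * y)) 1 :=
        le_min hH (by exact ENNReal.ofReal_le_one.mpr hs1.le)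
      have := ENNReal.toReal_mono (by simp : min (H (t * x + (1-t) * y)) 1 ≠ ⊤) hmin
      rwa [ENNReal.toReal_ofReal hs0.le] at this
    calc ENNReal.ofReal t * volume A + ENNReal.ofReal (1-t) * volume B
        = volume (t • A) + volume ((1-t) • B) := by rw [hvolA, hvolB]
      _ ≤ volume ((t • A) + ((1-t) • B)) :=
          bm_one_dim (hAmeas.const_smul₀ t) (hBmeas.const_smul₀ (1-t))
            (hAne.smul_set) (hBne.smul_set)
            (by rw [hvolA]; exact ENNReal.mul_ne_top ENNReal.ofReal_ne_top (hFfin s hs0))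
            (by rw [hvolB]; exact ENNReal.mul_ne_top ENNReal.ofReal_ne_top (hGfin s hs0))
      _ ≤ volume {z | s ≤ HR z} := measure_mono hsub
  -- tail measure functions are measurable (antitone)
  have hvolFanti : Antitone fun s : ℝ => volume {x | s ≤ F x} := fun s s' hss' =>
    measure_mono fun x hx => le_trans hss' hx
  have hvolGanti : Antitone fun s : ℝ => volume {y | s ≤ G y} := fun s s' hss' =>
    measure_mono fun y hy => le_trans hss' hy
  have hvolFm : Measurable fun s : ℝ => volume {x | s ≤ F x} := hvolFanti.measurable
  have hvolGm : Measurable fun s : ℝ => volume {y | s ≤ G y} := hvolGanti.measurable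
  -- the tails vanish beyond 1
  have htailF : ∫⁻ s in Ioi (0:ℝ), volume {x | s ≤ F x} =
      ∫⁻ s in Ioo (0:ℝ) 1, volume {x | s ≤ F x} := by
    have hsplit : Ioi (0:ℝ) = Ioo 0 1 ∪ Ici 1 := by
      ext x; simp only [mem_Ioi, mem_union, mem_Ioo, mem_Ici]; constructor
      · intro h; by_cases h1 : x < 1
        · exact Or.inl ⟨h, h1⟩
        · exact Or.inr (le_of_not_gt h1)
      · rintro (⟨h, _⟩ | h) <;> linarith
    rw [hsplit, lintegral_union measurableSet_Ici (by
      rw [Set.disjoint_left]; rintro x ⟨_, h1⟩ h2; exact absurd h2 (not_le.mpr h1))]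
    have hzero : ∫⁻ s in Ici (1:ℝ), volume {x | s ≤ F x} = 0 := by
      rw [show (volume : Measure ℝ).restrict (Ici 1) = volume.restrict (Ioi 1) from
        (Measure.restrict_congr_set Ioi_ae_eq_Ici).symm]
      have h' : ∀ᵐ (s : ℝ) ∂volume, s ∈ Ioi (1:ℝ) →
          volume {x | s ≤ F x} = (fun _ : ℝ => (0:ℝ≥0∞)) s := by
        refine ae_of_all _ fun s hs => ?_
        have : {x | s ≤ F x} = ∅ := by
          ext x; simp only [mem_setOf_eq, mem_empty_iff_false, iff_false, not_le]
          exact lt_of_le_of_lt (hF1 x) hs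
        simp [this]
      rw [setLIntegral_congr_fun_ae measurableSet_Ioi h', lintegral_zero]
    rw [hzero, add_zero]
  have htailG : ∫⁻ s in Ioi (0:ℝ), volume {y | s ≤ G y} =
      ∫⁻ s in Ioo (0:ℝ) 1, volume {y | s ≤ G y} := by
    have hsplit : Ioi (0:ℝ) = Ioo 0 1 ∪ Ici 1 := by
      ext x; simp only [mem_Ioi, mem_union, mem_Ioo, mem_Ici]; constructor
      · intro h; by_cases h1 : x < 1
        · exact Or.inl ⟨h, h1⟩
        · exact Or.inr (le_of_not_gt h1)
      · rintro (⟨h, _⟩ | h) <;> linarith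
    rw [hsplit, lintegral_union measurableSet_Ici (by
      rw [Set.disjoint_left]; rintro x ⟨_, h1⟩ h2; exact absurd h2 (not_le.mpr h1))]
    have hzero : ∫⁻ s in Ici (1:ℝ), volume {y | s ≤ G y} = 0 := by
      rw [show (volume : Measure ℝ).restrict (Ici 1) = volume.restrict (Ioi 1) from
        (Measure.restrict_congr_set Ioi_ae_eq_Ici).symm]
      have h' : ∀ᵐ (s : ℝ) ∂volume, s ∈ Ioi (1:ℝ) →
          volume {y | s ≤ G y} = (fun _ : ℝ => (0:ℝ≥0∞)) s := by
        refine ae_of_all _ fun s hs => ?_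
        have : {y | s ≤ G y} = ∅ := by
          ext y; simp only [mem_setOf_eq, mem_empty_iff_false, iff_false, not_le]
          exact lt_of_le_of_lt (hG1 y) hs
        simp [this]
      rw [setLIntegral_congr_fun_ae measurableSet_Ioi h', lintegral_zero]
    rw [hzero, add_zero]
  have hF' : (∫⁻ x, ENNReal.ofReal (F x)) = ∫⁻ s in Ioo (0:ℝ) 1, volume {x | s ≤ F x} :=
    layerF.trans htailF
  have hG' : (∫⁻ x, ENNReal.ofReal (G x)) = ∫⁻ s in Ioo (0:ℝ) 1, volume {y | s ≤ G y} :=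
    layerG.trans htailG
  have hsum : (∫⁻ s in Ioo (0:ℝ) 1, (ENNReal.ofReal t * volume {x | s ≤ F x} +
        ENNReal.ofReal (1-t) * volume {y | s ≤ G y})) =
      ENNReal.ofReal t * (∫⁻ s in Ioo (0:ℝ) 1, volume {x | s ≤ F x}) +
        ENNReal.ofReal (1-t) * (∫⁻ s in Ioo (0:ℝ) 1, volume {y | s ≤ G y}) := by
    rw [lintegral_add_left (hvolFm.const_mul _), lintegral_const_mul _ hvolFm,
      lintegral_const_mul _ hvolGm]
  rw [hF', hG', ← hsum]
  calc (∫⁻ s in Ioo (0:ℝ) 1, (ENNReal.ofReal t * volume {x | s ≤ F x} +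
        ENNReal.ofReal (1-t) * volume {y | s ≤ G y}))
      ≤ ∫⁻ s in Ioo (0:ℝ) 1, volume {z | s ≤ HR z} :=
        setLIntegral_mono ((Antitone.measurable (fun s s' hss' =>
          measure_mono fun z hz => le_trans hss' hz))) key
    _ ≤ ∫⁻ s in Ioi (0:ℝ), volume {z | s ≤ HR z} :=
        lintegral_mono_set (fun s hs => hs.1)
    _ = ∫⁻ z, ENNReal.ofReal (HR z) := layerH.symm
    _ ≤ ∫⁻ z, H z := hHdom



/-- The Prékopa–Leindler property for a measure on a real vector space. -/
def PLProp (E : Type*) [MeasurableSpace E] [AddCommMonoid E] [Module ℝ E]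
    (μ : Measure E) : Prop :=
  ∀ t : ℝ, 0 < t → t < 1 → ∀ f g h : E → ℝ≥0∞,
    Measurable f → Measurable g → Measurable h →
    (∀ x y, f x ^ t * g y ^ (1 - t) ≤ h (t • x + (1 - t) • y)) →
    (∫⁻ x, f x ∂μ) ^ t * (∫⁻ x, g x ∂μ) ^ (1 - t) ≤ ∫⁻ x, h x ∂μ

lemma ennreal_young {t : ℝ} (ht : 0 < t) (ht1 : t < 1) (x y : ℝ≥0∞) :
    x ^ t * y ^ (1 - t) ≤ ENNReal.ofReal t * x + ENNReal.ofReal (1 - t) * y := by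
  have ht1' : (0:ℝ) < 1 - t := by linarith
  rcases eq_or_ne x ⊤ with rfl | hx
  · have : ENNReal.ofReal t * ⊤ = ⊤ := by
      rw [ENNReal.mul_top]; simp [ENNReal.ofReal_eq_zero, not_le.mpr ht]
    rw [this]; simp
  rcases eq_or_ne y ⊤ with rfl | hy
  · have : ENNReal.ofReal (1 - t) * ⊤ = ⊤ := by
      rw [ENNReal.mul_top]; simp [ENNReal.ofReal_eq_zero, not_le.mpr ht1']
    rw [this]; simp
  have hx' : x = ENNReal.ofReal x.toReal := (ENNReal.ofReal_toReal hx).symm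
  have hy' : y = ENNReal.ofReal y.toReal := (ENNReal.ofReal_toReal hy).symm
  rw [hx', hy', ENNReal.ofReal_rpow_of_nonneg ENNReal.toReal_nonneg ht.le,
    ENNReal.ofReal_rpow_of_nonneg ENNReal.toReal_nonneg ht1'.le,
    ← ENNReal.ofReal_mul (Real.rpow_nonneg ENNReal.toReal_nonneg _),
    ← ENNReal.ofReal_mul ht.le, ← ENNReal.ofReal_mul ht1'.le,
    ← ENNReal.ofReal_add (by positivity) (by positivity)]
  exact ENNReal.ofReal_le_ofReal
    (Real.geom_mean_le_arith_mean2_weighted ht.le ht1'.le ENNReal.toReal_nonneg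
      ENNReal.toReal_nonneg (by ring))

lemma iSup_min_nat (a : ℝ≥0∞) : ⨆ n : ℕ, min a n = a := by
  refine le_antisymm (iSup_le fun n => min_le_left _ _) ?_
  rcases eq_or_ne a ⊤ with rfl | ha
  · calc (⊤:ℝ≥0∞) = ⨆ n : ℕ, (n:ℝ≥0∞) := ENNReal.iSup_natCast.symm
      _ ≤ ⨆ n : ℕ, min ⊤ (n:ℝ≥0∞) := by simp
  · obtain ⟨n, hn⟩ := ENNReal.exists_nat_gt ha
    exact le_iSup_of_le n (by rw [min_eq_left hn.le])

lemma plProp_real : PLProp ℝ volume := by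
  intro t ht ht1 f g h hf hg hh hyp
  have ht1' : (0:ℝ) < 1 - t := by linarith
  by_cases hf0 : (∫⁻ x, f x) = 0
  · rw [hf0, ENNReal.zero_rpow_of_pos ht, zero_mul]; exact zero_le
  by_cases hg0 : (∫⁻ x, g x) = 0
  · rw [hg0, ENNReal.zero_rpow_of_pos ht1', mul_zero]; exact zero_le
  -- truncations
  set fn : ℕ → ℝ → ℝ≥0∞ := fun n => (Icc (-(n:ℝ)) n).indicator (fun x => min (f x) n) with hfn
  set gn : ℕ → ℝ → ℝ≥0∞ := fun n => (Icc (-(n:ℝ)) n).indicator (fun x => min (g x) n) with hgn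
  have hfnm : ∀ n, Measurable (fn n) := fun n =>
    (hf.min measurable_const).indicator measurableSet_Icc
  have hgnm : ∀ n, Measurable (gn n) := fun n =>
    (hg.min measurable_const).indicator measurableSet_Icc
  have hIccmono : ∀ (n m : ℕ), n ≤ m → Icc (-(n:ℝ)) n ⊆ Icc (-(m:ℝ)) m := by
    intro n m hnm x hx
    have : (n:ℝ) ≤ m := Nat.cast_le.mpr hnm
    exact ⟨by linarith [hx.1], by linarith [hx.2]⟩
  have hfnmono : Monotone fn := by
    intro n m hnm x
    by_cases hx : x ∈ Icc (-(n:ℝ)) n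
    · simp only [hfn, indicator_of_mem hx, indicator_of_mem (hIccmono n m hnm hx)]
      exact min_le_min le_rfl (Nat.cast_le.mpr hnm)
    · simp only [hfn, indicator_of_notMem hx]; exact zero_le
  have hgnmono : Monotone gn := by
    intro n m hnm x
    by_cases hx : x ∈ Icc (-(n:ℝ)) n
    · simp only [hgn, indicator_of_mem hx, indicator_of_mem (hIccmono n m hnm hx)]
      exact min_le_min le_rfl (Nat.cast_le.mpr hnm)
    · simp only [hgn, indicator_of_notMem hx]; exact zero_le
  have hfnle : ∀ n x, fn n x ≤ f x := by
    intro n x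
    by_cases hx : x ∈ Icc (-(n:ℝ)) n
    · simp only [hfn, indicator_of_mem hx]; exact min_le_left _ _
    · simp only [hfn, indicator_of_notMem hx]; exact zero_le
  have hgnle : ∀ n x, gn n x ≤ g x := by
    intro n x
    by_cases hx : x ∈ Icc (-(n:ℝ)) n
    · simp only [hgn, indicator_of_mem hx]; exact min_le_left _ _
    · simp only [hgn, indicator_of_notMem hx]; exact zero_le
  have hfsup : ∀ x, (⨆ n, fn n x) = f x := by
    intro x
    refine le_antisymm (iSup_le fun n => hfnle n x) ?_
    conv_lhs => rw [← iSup_min_nat (f x)]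
    refine iSup_le fun n => ?_
    obtain ⟨N, hN⟩ := exists_nat_ge |x|
    refine le_iSup_of_le (max n N) ?_
    have hxmem : x ∈ Icc (-((max n N : ℕ):ℝ)) ((max n N : ℕ)) := by
      have : |x| ≤ ((max n N : ℕ):ℝ) :=
        hN.trans (Nat.cast_le.mpr (le_max_right n N))
      rw [abs_le] at this
      exact ⟨this.1, this.2⟩
    simp only [hfn, indicator_of_mem hxmem]
    exact min_le_min le_rfl (Nat.cast_le.mpr (le_max_left n N))
  have hgsup : ∀ x, (⨆ n, gn n x) = g x := by
    intro x
    refine le_antisymm (iSup_le fun n => hgnle n x) ?_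
    conv_lhs => rw [← iSup_min_nat (g x)]
    refine iSup_le fun n => ?_
    obtain ⟨N, hN⟩ := exists_nat_ge |x|
    refine le_iSup_of_le (max n N) ?_
    have hxmem : x ∈ Icc (-((max n N : ℕ):ℝ)) ((max n N : ℕ)) := by
      have : |x| ≤ ((max n N : ℕ):ℝ) :=
        hN.trans (Nat.cast_le.mpr (le_max_right n N))
      rw [abs_le] at this
      exact ⟨this.1, this.2⟩
    simp only [hgn, indicator_of_mem hxmem]
    exact min_le_min le_rfl (Nat.cast_le.mpr (le_max_left n N))
  have hfint : (⨆ n, ∫⁻ x, fn n x) = ∫⁻ x, f x := by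
    rw [← lintegral_iSup hfnm (fun n m hnm => fun x => hfnmono hnm x)]
    exact lintegral_congr hfsup
  have hgint : (⨆ n, ∫⁻ x, gn n x) = ∫⁻ x, g x := by
    rw [← lintegral_iSup hgnm (fun n m hnm => fun x => hgnmono hnm x)]
    exact lintegral_congr hgsup
  -- choose a common index with positive truncated integrals
  have hexf : ∃ n, 0 < ∫⁻ x, fn n x := by
    by_contra hcon
    push_neg at hcon
    simp only [nonpos_iff_eq_zero] at hcon
    exact hf0 (by rw [← hfint]; simp [hcon])
  have hexg : ∃ n, 0 < ∫⁻ x, gn n x := by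
    by_contra hcon
    push_neg at hcon
    simp only [nonpos_iff_eq_zero] at hcon
    exact hg0 (by rw [← hgint]; simp [hcon])
  obtain ⟨n₁, hn₁⟩ := hexf
  obtain ⟨n₂, hn₂⟩ := hexg
  -- the key finite-level inequality
  have key : ∀ n : ℕ, 0 < (∫⁻ x, fn n x) → 0 < (∫⁻ x, gn n x) →
      (∫⁻ x, fn n x) ^ t * (∫⁻ x, gn n x) ^ (1 - t) ≤ ∫⁻ x, h x := by
    intro n hfnpos hgnpos
    set a := essSup (fn n) volume with ha
    set b := essSup (gn n) volume with hb
    have ha0 : a ≠ 0 := by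
      intro hcon
      have : fn n =ᵐ[volume] 0 := ENNReal.essSup_eq_zero_iff.mp hcon
      rw [lintegral_congr_ae this] at hfnpos
      simp at hfnpos
    have hb0 : b ≠ 0 := by
      intro hcon
      have : gn n =ᵐ[volume] 0 := ENNReal.essSup_eq_zero_iff.mp hcon
      rw [lintegral_congr_ae this] at hgnpos
      simp at hgnpos
    have hatop : a ≠ ⊤ := by
      refine ne_top_of_le_ne_top (b := (n:ℝ≥0∞)) (by simp) ?_
      refine essSup_le_of_ae_le _ (ae_of_all _ fun x => ?_)
      by_cases hx : x ∈ Icc (-(n:ℝ)) n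
      · simp only [hfn, indicator_of_mem hx]; exact min_le_right _ _
      · simp only [hfn, indicator_of_notMem hx]; exact zero_le
    have hbtop : b ≠ ⊤ := by
      refine ne_top_of_le_ne_top (b := (n:ℝ≥0∞)) (by simp) ?_
      refine essSup_le_of_ae_le _ (ae_of_all _ fun x => ?_)
      by_cases hx : x ∈ Icc (-(n:ℝ)) n
      · simp only [hgn, indicator_of_mem hx]; exact min_le_right _ _
      · simp only [hgn, indicator_of_notMem hx]; exact zero_le
    set φ : ℝ → ℝ≥0∞ := fun x => a⁻¹ * fn n x with hφ
    set ψ : ℝ → ℝ≥0∞ := fun x => b⁻¹ * gn n x with hψ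
    have hφm : Measurable φ := measurable_const.mul (hfnm n)
    have hψm : Measurable ψ := measurable_const.mul (hgnm n)
    have hφess : essSup φ volume = 1 := by
      rw [hφ, ENNReal.essSup_const_mul, ← ha, ENNReal.inv_mul_cancel ha0 hatop]
    have hψess : essSup ψ volume = 1 := by
      rw [hψ, ENNReal.essSup_const_mul, ← hb, ENNReal.inv_mul_cancel hb0 hbtop]
    set Fr : ℝ → ℝ := fun x => (min (φ x) 1).toReal with hFr
    set Gr : ℝ → ℝ := fun y => (min (ψ y) 1).toReal with hGr
    have hFrm : Measurable Fr := (hφm.min measurable_const).ennreal_toReal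
    have hGrm : Measurable Gr := (hψm.min measurable_const).ennreal_toReal
    have hminφtop : ∀ x, min (φ x) 1 ≠ ⊤ := fun x => by simp
    have hminψtop : ∀ y, min (ψ y) 1 ≠ ⊤ := fun y => by simp
    have hofFr : ∀ x, ENNReal.ofReal (Fr x) = min (φ x) 1 := fun x =>
      ENNReal.ofReal_toReal (hminφtop x)
    have hofGr : ∀ y, ENNReal.ofReal (Gr y) = min (ψ y) 1 := fun y =>
      ENNReal.ofReal_toReal (hminψtop y)
    have hFr0 : ∀ x, 0 ≤ Fr x := fun x => ENNReal.toReal_nonneg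
    have hGr0 : ∀ y, 0 ≤ Gr y := fun y => ENNReal.toReal_nonneg
    have hFr1 : ∀ x, Fr x ≤ 1 := fun x => by
      simpa using ENNReal.toReal_mono (by simp) (min_le_right (φ x) 1)
    have hGr1 : ∀ y, Gr y ≤ 1 := fun y => by
      simpa using ENNReal.toReal_mono (by simp) (min_le_right (ψ y) 1)
    have hφae : (fun x => min (φ x) 1) =ᵐ[volume] φ := by
      filter_upwards [ENNReal.ae_le_essSup φ] with x hx
      rw [hφess] at hx
      exact min_eq_left hx
    have hψae : (fun y => min (ψ y) 1) =ᵐ[volume] ψ := by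
      filter_upwards [ENNReal.ae_le_essSup ψ] with y hy
      rw [hψess] at hy
      exact min_eq_left hy
    have hintFr : (∫⁻ x, ENNReal.ofReal (Fr x)) = a⁻¹ * ∫⁻ x, fn n x := by
      rw [lintegral_congr hofFr, lintegral_congr_ae hφae, hφ,
        lintegral_const_mul _ (hfnm n)]
    have hintGr : (∫⁻ y, ENNReal.ofReal (Gr y)) = b⁻¹ * ∫⁻ y, gn n y := by
      rw [lintegral_congr hofGr, lintegral_congr_ae hψae, hψ,
        lintegral_const_mul _ (hgnm n)]
    -- level-set positivity
    have hFrpos : ∀ s : ℝ, 0 < s → s < 1 → volume {x | s ≤ Fr x} ≠ 0 := by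
      intro s hs0 hs1 hcon
      have hae : ∀ᵐ x ∂volume, φ x ≤ ENNReal.ofReal s := by
        have hae1 : ∀ᵐ x ∂volume, Fr x < s := by
          rw [ae_iff]; simpa [not_lt] using hcon
        filter_upwards [hae1, hφae] with x hx1 hx2
        have hlt : Fr x < s := hx1
        have hlt2 : min (φ x) 1 < ENNReal.ofReal s := by
          rw [ENNReal.lt_ofReal_iff_toReal_lt (hminφtop x)]
          exact hlt
        rw [hx2] at hlt2
        exact hlt2.le
      have : essSup φ volume ≤ ENNReal.ofReal s := essSup_le_of_ae_le _ hae
      rw [hφess] at this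
      exact absurd (this.trans_lt (ENNReal.ofReal_lt_one.mpr hs1)) (lt_irrefl _)
    have hGrpos : ∀ s : ℝ, 0 < s → s < 1 → volume {y | s ≤ Gr y} ≠ 0 := by
      intro s hs0 hs1 hcon
      have hae : ∀ᵐ y ∂volume, ψ y ≤ ENNReal.ofReal s := by
        have hae1 : ∀ᵐ y ∂volume, Gr y < s := by
          rw [ae_iff]; simpa [not_lt] using hcon
        filter_upwards [hae1, hψae] with y hy1 hy2
        have hlt : Gr y < s := hy1
        have hlt2 : min (ψ y) 1 < ENNReal.ofReal s := by
          rw [ENNReal.lt_ofReal_iff_toReal_lt (hminψtop y)]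
          exact hlt
        rw [hy2] at hlt2
        exact hlt2.le
      have : essSup ψ volume ≤ ENNReal.ofReal s := essSup_le_of_ae_le _ hae
      rw [hψess] at this
      exact absurd (this.trans_lt (ENNReal.ofReal_lt_one.mpr hs1)) (lt_irrefl _)
    -- level-set finiteness
    have hFrfin : ∀ s : ℝ, 0 < s → volume {x | s ≤ Fr x} ≠ ⊤ := by
      intro s hs0
      refine ne_top_of_le_ne_top (measure_Icc_lt_top (a := -(n:ℝ)) (b := (n:ℝ))).ne
        (measure_mono fun x hx => ?_)
      by_contra hxmem
      have hfn0 : fn n x = 0 := by simp only [hfn]; exact indicator_of_notMem hxmem _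
      have : Fr x = 0 := by
        rw [hFr]
        simp only [hφ, hfn0, mul_zero]
        simp
      rw [mem_setOf_eq, this] at hx
      linarith
    have hGrfin : ∀ s : ℝ, 0 < s → volume {y | s ≤ Gr y} ≠ ⊤ := by
      intro s hs0
      refine ne_top_of_le_ne_top (measure_Icc_lt_top (a := -(n:ℝ)) (b := (n:ℝ))).ne
        (measure_mono fun y hy => ?_)
      by_contra hymem
      have hgn0 : gn n y = 0 := by simp only [hgn]; exact indicator_of_notMem hymem _
      have : Gr y = 0 := by
        rw [hGr]
        simp only [hψ, hgn0, mul_zero]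
        simp
      rw [mem_setOf_eq, this] at hy
      linarith
    -- the rescaled h
    set c : ℝ≥0∞ := a⁻¹ ^ t * b⁻¹ ^ (1 - t) with hc
    have hc0 : c ≠ 0 := by
      rw [hc]
      refine mul_ne_zero ?_ ?_ <;> rw [Ne, ENNReal.rpow_eq_zero_iff] <;>
        rintro (⟨h1, _⟩ | ⟨h1, h2⟩)
      · exact (ENNReal.inv_ne_zero.mpr hatop) h1
      · linarith
      · exact (ENNReal.inv_ne_zero.mpr hbtop) h1
      · linarith
    have hctop : c ≠ ⊤ := by
      rw [hc]
      refine ENNReal.mul_ne_top ?_ ?_ <;> rw [Ne, ENNReal.rpow_eq_top_iff] <;>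
        rintro (⟨h1, h2⟩ | ⟨h1, _⟩)
      · linarith
      · exact (ENNReal.inv_ne_top.mpr ha0) h1
      · linarith
      · exact (ENNReal.inv_ne_top.mpr hb0) h1
    set H : ℝ → ℝ≥0∞ := fun z => c * h z with hH
    have hHm : Measurable H := measurable_const.mul hh
    have hyp' : ∀ x y : ℝ, ENNReal.ofReal (Fr x ^ t * Gr y ^ (1 - t)) ≤
        H (t * x + (1 - t) * y) := by
      intro x y
      have e1 : ENNReal.ofReal (Fr x ^ t * Gr y ^ (1 - t)) =
          (min (φ x) 1) ^ t * (min (ψ y) 1) ^ (1 - t) := by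
        rw [ENNReal.ofReal_mul (Real.rpow_nonneg (hFr0 x) _),
          ← ENNReal.ofReal_rpow_of_nonneg (hFr0 x) ht.le,
          ← ENNReal.ofReal_rpow_of_nonneg (hGr0 y) ht1'.le, hofFr, hofGr]
      rw [e1]
      have e2 : (min (φ x) 1) ^ t * (min (ψ y) 1) ^ (1 - t) ≤ φ x ^ t * ψ y ^ (1-t) :=
        mul_le_mul' (ENNReal.rpow_le_rpow (min_le_left _ _) ht.le)
          (ENNReal.rpow_le_rpow (min_le_left _ _) ht1'.le)
      have e3 : φ x ^ t * ψ y ^ (1-t) = c * (fn n x ^ t * gn n y ^ (1-t)) := by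
        rw [hφ, hψ]
        simp only
        rw [ENNReal.mul_rpow_of_nonneg _ _ ht.le, ENNReal.mul_rpow_of_nonneg _ _ ht1'.le, hc]
        ring
      have e4 : fn n x ^ t * gn n y ^ (1-t) ≤ h (t * x + (1 - t) * y) := by
        calc fn n x ^ t * gn n y ^ (1-t) ≤ f x ^ t * g y ^ (1-t) :=
              mul_le_mul' (ENNReal.rpow_le_rpow (hfnle n x) ht.le)
                (ENNReal.rpow_le_rpow (hgnle n y) ht1'.le)
          _ ≤ h (t • x + (1 - t) • y) := hyp x y
          _ = h (t * x + (1 - t) * y) := by rw [smul_eq_mul, smul_eq_mul]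
      calc (min (φ x) 1) ^ t * (min (ψ y) 1) ^ (1 - t)
          ≤ φ x ^ t * ψ y ^ (1-t) := e2
        _ = c * (fn n x ^ t * gn n y ^ (1-t)) := e3
        _ ≤ c * h (t * x + (1 - t) * y) := mul_le_mul' le_rfl e4
        _ = H (t * x + (1 - t) * y) := rfl
    have core := dim1_core ht ht1 Fr Gr hFrm hGrm hFr0 hFr1 hGr0 hGr1
      hFrpos hGrpos hFrfin hGrfin H hHm hyp'
    have hintH : (∫⁻ z, H z) = c * ∫⁻ z, h z := by
      rw [hH]; exact lintegral_const_mul _ hh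
    have hyoung := ennreal_young ht ht1 (∫⁻ x, ENNReal.ofReal (Fr x))
      (∫⁻ y, ENNReal.ofReal (Gr y))
    have hchain : (∫⁻ x, ENNReal.ofReal (Fr x)) ^ t *
        (∫⁻ y, ENNReal.ofReal (Gr y)) ^ (1-t) ≤ c * ∫⁻ z, h z := by
      calc (∫⁻ x, ENNReal.ofReal (Fr x)) ^ t * (∫⁻ y, ENNReal.ofReal (Gr y)) ^ (1-t)
          ≤ ENNReal.ofReal t * (∫⁻ x, ENNReal.ofReal (Fr x)) +
            ENNReal.ofReal (1 - t) * (∫⁻ y, ENNReal.ofReal (Gr y)) := hyoung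
        _ ≤ ∫⁻ z, H z := core
        _ = c * ∫⁻ z, h z := hintH
    rw [hintFr, hintGr, ENNReal.mul_rpow_of_nonneg _ _ ht.le,
      ENNReal.mul_rpow_of_nonneg _ _ ht1'.le, mul_mul_mul_comm, ← hc] at hchain
    exact (ENNReal.mul_le_mul_iff_right hc0 hctop).mp hchain
  -- pass to the limit
  have hmainf : Tendsto (fun n => ∫⁻ x, fn n x) atTop (nhds (∫⁻ x, f x)) := by
    rw [← hfint]
    exact tendsto_atTop_iSup (fun n m hnm => lintegral_mono fun x => hfnmono hnm x)
  have hmaing : Tendsto (fun n => ∫⁻ x, gn n x) atTop (nhds (∫⁻ x, g x)) := by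
    rw [← hgint]
    exact tendsto_atTop_iSup (fun n m hnm => lintegral_mono fun x => hgnmono hnm x)
  have htend : Tendsto (fun n => (∫⁻ x, fn n x) ^ t * (∫⁻ x, gn n x) ^ (1-t)) atTop
      (nhds ((∫⁻ x, f x) ^ t * (∫⁻ x, g x) ^ (1-t))) := by
    have hane : (∫⁻ x, f x) ^ t ≠ 0 := by
      rw [Ne, ENNReal.rpow_eq_zero_iff]
      rintro (⟨h1, _⟩ | ⟨_, h2⟩)
      · exact hf0 h1
      · linarith
    have hbne : (∫⁻ x, g x) ^ (1-t) ≠ 0 := by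
      rw [Ne, ENNReal.rpow_eq_zero_iff]
      rintro (⟨h1, _⟩ | ⟨_, h2⟩)
      · exact hg0 h1
      · linarith
    exact ENNReal.Tendsto.mul ((ENNReal.continuous_rpow_const.tendsto _).comp hmainf)
      (Or.inl hane) ((ENNReal.continuous_rpow_const.tendsto _).comp hmaing) (Or.inl hbne)
  refine le_of_tendsto htend (Filter.eventually_atTop.mpr ⟨max n₁ n₂, fun n hn => ?_⟩)
  refine key n ?_ ?_
  · exact hn₁.trans_le (lintegral_mono fun x => hfnmono ((le_max_left n₁ n₂).trans hn) x)
  · exact hn₂.trans_le (lintegral_mono fun x => hgnmono ((le_max_right n₁ n₂).trans hn) x)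



lemma plProp_transfer {E F : Type*} [MeasurableSpace E] [AddCommMonoid E] [Module ℝ E]
    [MeasurableSpace F] [AddCommMonoid F] [Module ℝ F] {μ : Measure E} {ν : Measure F}
    (e : E ≃ᵐ F) (he : MeasurePreserving e μ ν)
    (hlin : ∀ (a b : ℝ) (x y : E), e (a • x + b • y) = a • e x + b • e y)
    (hPL : PLProp E μ) : PLProp F ν := by
  intro t ht ht1 f g h hf hg hh hyp
  have h1 : ∀ k : F → ℝ≥0∞, Measurable k → (∫⁻ x, k (e x) ∂μ) = ∫⁻ y, k y ∂ν :=
    fun k hk => he.lintegral_comp hk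
  rw [← h1 f hf, ← h1 g hg, ← h1 h hh]
  exact hPL t ht ht1 (fun x => f (e x)) (fun x => g (e x)) (fun x => h (e x))
    (hf.comp e.measurable) (hg.comp e.measurable) (hh.comp e.measurable)
    (fun x y => by
      show f (e x) ^ t * g (e y) ^ (1 - t) ≤ h (e (t • x + (1 - t) • y))
      rw [hlin t (1-t) x y]; exact hyp (e x) (e y))

lemma symm_lin {E F : Type*} [MeasurableSpace E] [AddCommMonoid E] [Module ℝ E]
    [MeasurableSpace F] [AddCommMonoid F] [Module ℝ F] (e : E ≃ᵐ F)
    (hlin : ∀ (a b : ℝ) (x y : E), e (a • x + b • y) = a • e x + b • e y) :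
    ∀ (a b : ℝ) (x y : F), e.symm (a • x + b • y) = a • e.symm x + b • e.symm y := by
  intro a b x y
  have : a • x + b • y = e (a • e.symm x + b • e.symm y) := by
    rw [hlin, e.apply_symm_apply, e.apply_symm_apply]
  rw [this, e.symm_apply_apply]

lemma plProp_prod {E : Type*} [MeasurableSpace E] [AddCommMonoid E] [Module ℝ E]
    (μ : Measure E) [SigmaFinite μ] (hE : PLProp E μ) : PLProp (ℝ × E) (volume.prod μ) := by
  intro t ht ht1 f g h hf hg hh hyp
  set Fm : ℝ → ℝ≥0∞ := fun a => ∫⁻ x, f (a, x) ∂μ with hFm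
  set Gm : ℝ → ℝ≥0∞ := fun a => ∫⁻ x, g (a, x) ∂μ with hGm
  set Hm : ℝ → ℝ≥0∞ := fun a => ∫⁻ x, h (a, x) ∂μ with hHm
  have hFmm : Measurable Fm := hf.lintegral_prod_right'
  have hGmm : Measurable Gm := hg.lintegral_prod_right'
  have hHmm : Measurable Hm := hh.lintegral_prod_right'
  have hyp1 : ∀ a₁ a₂ : ℝ, Fm a₁ ^ t * Gm a₂ ^ (1 - t) ≤ Hm (t • a₁ + (1 - t) • a₂) := by
    intro a₁ a₂
    refine hE t ht ht1 (fun x => f (a₁, x)) (fun y => g (a₂, y))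
      (fun z => h (t • a₁ + (1 - t) • a₂, z))
      (hf.comp measurable_prodMk_left) (hg.comp measurable_prodMk_left)
      (hh.comp measurable_prodMk_left) (fun x y => ?_)
    have := hyp (a₁, x) (a₂, y)
    simpa [Prod.smul_mk, Prod.mk_add_mk] using this
  have hcore := plProp_real t ht ht1 Fm Gm Hm hFmm hGmm hHmm hyp1
  rw [lintegral_prod f hf.aemeasurable, lintegral_prod g hg.aemeasurable,
    lintegral_prod h hh.aemeasurable]
  exact hcore

lemma plProp_pi_fin : ∀ d : ℕ, PLProp (Fin d → ℝ) volume := by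
  intro d
  induction d with
  | zero =>
    intro t ht ht1 f g h hf hg hh hyp
    have huniv : (volume : Measure (Fin 0 → ℝ)) Set.univ = 1 := by
      rw [volume_pi, Measure.pi_univ]; simp
    rw [lintegral_unique, lintegral_unique, lintegral_unique, huniv, mul_one, mul_one, mul_one]
    have hd : t • (default : Fin 0 → ℝ) + (1 - t) • default = default :=
      Subsingleton.elim _ _
    have h2 : f default ^ t * g default ^ (1 - t) ≤ h default := by
      have h3 := hyp default default
      rwa [hd] at h3
    convert h2 using 3 <;> exact congrArg _ (Subsingleton.elim _ _)
  | succ d ih =>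
    have hprod := plProp_prod (volume : Measure (Fin d → ℝ)) ih
    set e : (Fin (d+1) → ℝ) ≃ᵐ ℝ × (Fin d → ℝ) :=
      MeasurableEquiv.piFinSuccAbove (fun _ => ℝ) 0 with he
    have hmp : MeasurePreserving e volume volume :=
      volume_preserving_piFinSuccAbove (fun _ => ℝ) 0
    have hlin : ∀ (a b : ℝ) (x y : Fin (d+1) → ℝ),
        e (a • x + b • y) = a • e x + b • e y := by
      intro a b x y
      rfl
    have hmp' : MeasurePreserving e.symm
        ((volume : Measure ℝ).prod (volume : Measure (Fin d → ℝ))) volume := by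
      have := hmp.symm e
      rwa [Measure.volume_eq_prod] at this
    exact plProp_transfer e.symm hmp' (symm_lin e hlin) hprod

lemma plProp_pi (ι : Type*) [Fintype ι] : PLProp (ι → ℝ) volume := by
  set e' : Fin (Fintype.card ι) ≃ ι := (Fintype.equivFin ι).symm with he'
  set e : (Fin (Fintype.card ι) → ℝ) ≃ᵐ (ι → ℝ) :=
    MeasurableEquiv.piCongrLeft (fun _ => ℝ) e' with he
  have hmp : MeasurePreserving e volume volume :=
    volume_measurePreserving_piCongrLeft (fun _ => ℝ) e'
  have hlin : ∀ (a b : ℝ) (x y : Fin (Fintype.card ι) → ℝ),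
      e (a • x + b • y) = a • e x + b • e y := by
    intro a b x y
    have hco : (⇑e : (Fin (Fintype.card ι) → ℝ) → (ι → ℝ)) =
        ⇑(Equiv.piCongrLeft (fun _ : ι => ℝ) e') := by
      rw [he]; exact MeasurableEquiv.coe_piCongrLeft e'
    rw [hco]
    funext i
    obtain ⟨j, rfl⟩ := e'.surjective i
    simp [Equiv.piCongrLeft_apply_apply]
  exact plProp_transfer e hmp hlin (plProp_pi_fin _)

end PLAux

/-- For a Gaussian disturbance and convex sets `𝒰, 𝒮, 𝒯`, the open-loop
reach-avoid probability `U ↦ ℙ{Ā x₀ + H̄ U + Ḡ W ∈ 𝒮 × ⋯ × 𝒮 × 𝒯}` is a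
log-concave function of `U` over the convex set `𝒰^N`. -/
theorem open_loop_reach_avoid_prob_logconcave
    {Ω : Type*} {mΩ : MeasurableSpace Ω} {μ : Measure Ω} [IsProbabilityMeasure μ]
    {n m N : ℕ}
    (Abar : Matrix (Fin N × Fin n) (Fin n) ℝ)
    (Hbar : Matrix (Fin N × Fin n) (Fin N × Fin m) ℝ)
    (Gbar : Matrix (Fin N × Fin n) (Fin N × Fin n) ℝ)
    (x₀ : Fin n → ℝ)
    (W : Ω → (Fin N × Fin n → ℝ)) (hW : Measurable W)
    (mW : Fin N × Fin n → ℝ) (SW : Matrix (Fin N × Fin n) (Fin N × Fin n) ℝ)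
    (hSW : SW.PosDef)
    -- W is Gaussian: its law has the nondegenerate Gaussian density N(mW, SW)
    (hWgauss : Measure.map W μ = volume.withDensity (fun z =>
      ENNReal.ofReal ((2 * π) ^ (-((N * n : ℕ) : ℝ) / 2) * SW.det ^ (-(1 : ℝ) / 2) *
        Real.exp (-((z - mW) ⬝ᵥ SW⁻¹.mulVec (z - mW)) / 2))))
    (𝒮 𝒯 : Set (Fin n → ℝ)) (h𝒮conv : Convex ℝ 𝒮) (h𝒯conv : Convex ℝ 𝒯)
    (h𝒮meas : MeasurableSet 𝒮) (h𝒯meas : MeasurableSet 𝒯)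
    (𝒰 : Set (Fin m → ℝ)) (h𝒰conv : Convex ℝ 𝒰) (h𝒰comp : IsCompact 𝒰)
    -- the reach-avoid tube 𝒮 × ⋯ × 𝒮 × 𝒯 and the probability as a function of U
    (C : Set (Fin N × Fin n → ℝ))
    (hC : C = {X | ∀ k : Fin N,
      (fun i => X (k, i)) ∈ (if (k : ℕ) = N - 1 then 𝒯 else 𝒮)})
    (F : (Fin N × Fin m → ℝ) → ℝ)
    (hF : ∀ U, F U =
      (μ {ω | Abar.mulVec x₀ + Hbar.mulVec U + Gbar.mulVec (W ω) ∈ C}).toReal) :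
    ∀ U₁ U₂ : Fin N × Fin m → ℝ,
      (∀ k, (fun i => U₁ (k, i)) ∈ 𝒰) → (∀ k, (fun i => U₂ (k, i)) ∈ 𝒰) →
      ∀ t : ℝ, 0 ≤ t → t ≤ 1 →
        F U₁ ^ t * F U₂ ^ (1 - t) ≤ F (t • U₁ + (1 - t) • U₂) := by
  intro U₁ U₂ _ _ t ht0 ht1
  -- edge cases
  rcases eq_or_lt_of_le ht0 with rfl | ht
  · simp only [Real.rpow_zero, one_mul, sub_zero, Real.rpow_one, zero_smul, zero_add, one_smul]
    exact le_rfl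
  rcases eq_or_lt_of_le ht1 with rfl | ht1'
  · simp only [Real.rpow_one, sub_self, Real.rpow_zero, mul_one, one_smul, sub_self,
      zero_smul, add_zero]
    exact le_rfl
  have ht1'' : (0:ℝ) < 1 - t := by linarith
  classical
  -- density and quadratic form
  set M : Matrix (Fin N × Fin n) (Fin N × Fin n) ℝ := SW⁻¹ with hM
  have hMpd : M.PosDef := hSW.inv
  have hMherm : M.IsHermitian := hMpd.1
  have hMT : Mᵀ = M := by
    rw [← Matrix.conjTranspose_eq_transpose_of_trivial]; exact hMherm.eq
  have hsym : ∀ u v : (Fin N × Fin n) → ℝ, u ⬝ᵥ M.mulVec v = v ⬝ᵥ M.mulVec u := by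
    intro u v
    rw [Matrix.dotProduct_mulVec, ← hMT, Matrix.vecMul_transpose, hMT, dotProduct_comm]
  have hMnn : ∀ u : (Fin N × Fin n) → ℝ, 0 ≤ u ⬝ᵥ M.mulVec u := by
    intro u
    have := hMpd.posSemidef.dotProduct_mulVec_nonneg u
    simpa using this
  set q : ((Fin N × Fin n) → ℝ) → ℝ := fun z => (z - mW) ⬝ᵥ M.mulVec (z - mW) with hq
  set c₀ : ℝ := (2 * π) ^ (-((N * n : ℕ) : ℝ) / 2) * SW.det ^ (-(1 : ℝ) / 2) with hc₀
  have hc₀pos : 0 < c₀ :=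
    mul_pos (Real.rpow_pos_of_pos (by positivity) _) (Real.rpow_pos_of_pos hSW.det_pos _)
  set ρ : ((Fin N × Fin n) → ℝ) → ℝ≥0∞ := fun z => ENNReal.ofReal (c₀ * Real.exp (-(q z) / 2)) with hρ
  have hρpos : ∀ z, 0 < c₀ * Real.exp (-(q z) / 2) :=
    fun z => mul_pos hc₀pos (Real.exp_pos _)
  -- measurability of the quadratic form and density
  have hqm : Measurable q := by
    have : Measurable fun z : (Fin N × Fin n) → ℝ => ∑ i : Fin N × Fin n, (z i - mW i) * (∑ j : Fin N × Fin n, M i j * (z j - mW j)) :=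
      Finset.measurable_sum _ fun i _ =>
        (((measurable_pi_apply i).sub measurable_const).mul
          (Finset.measurable_sum _ fun j _ =>
            ((measurable_pi_apply j).sub measurable_const).const_mul _))
    convert this using 1
    rfl
  have hρm : Measurable ρ :=
    ENNReal.measurable_ofReal.comp
      (measurable_const.mul (Real.measurable_exp.comp (hqm.neg.div_const 2)))
  -- convexity of the quadratic form
  have hqconv : ∀ x y : (Fin N × Fin n) → ℝ, q (t • x + (1 - t) • y) ≤ t * q x + (1 - t) * q y := by
    intro x y
    set u := x - mW with hu
    set v := y - mW with hv
    have hcomb : t • x + (1 - t) • y - mW = t • u + (1 - t) • v := by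
      rw [hu, hv]; module
    have hexp : ∀ (a b : ℝ) (w₁ w₂ : (Fin N × Fin n) → ℝ),
        (a • w₁ + b • w₂) ⬝ᵥ M.mulVec (a • w₁ + b • w₂) =
        a^2 * (w₁ ⬝ᵥ M.mulVec w₁) + 2*a*b * (w₁ ⬝ᵥ M.mulVec w₂) +
          b^2 * (w₂ ⬝ᵥ M.mulVec w₂) := by
      intro a b w₁ w₂
      rw [Matrix.mulVec_add, Matrix.mulVec_smul, Matrix.mulVec_smul,
        add_dotProduct, smul_dotProduct, smul_dotProduct,
        dotProduct_add, dotProduct_add,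
        dotProduct_smul, dotProduct_smul,
        dotProduct_smul, dotProduct_smul]
      rw [hsym w₂ w₁]
      simp only [smul_eq_mul]
      ring
    have hQuv : 0 ≤ (1:ℝ)^2 * (u ⬝ᵥ M.mulVec u) + 2*1*(-1) * (u ⬝ᵥ M.mulVec v) +
        (-1:ℝ)^2 * (v ⬝ᵥ M.mulVec v) := by
      rw [← hexp 1 (-1) u v]
      have := hMnn ((1:ℝ) • u + (-1:ℝ) • v)
      simpa using this
    have hqx : q x = u ⬝ᵥ M.mulVec u := by rw [hq]
    have hqy : q y = v ⬝ᵥ M.mulVec v := by rw [hq]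
    have hqc : q (t • x + (1 - t) • y) =
        t^2 * (u ⬝ᵥ M.mulVec u) + 2*t*(1-t) * (u ⬝ᵥ M.mulVec v) +
          (1-t)^2 * (v ⬝ᵥ M.mulVec v) := by
      rw [hq]
      simp only
      rw [hcomb, hexp]
    rw [hqc, hqx, hqy]
    nlinarith [mul_nonneg (mul_nonneg ht.le ht1''.le) hQuv, hMnn u, hMnn v]
  -- log-concavity of the density
  have hρlc : ∀ x y : (Fin N × Fin n) → ℝ, ρ x ^ t * ρ y ^ (1 - t) ≤ ρ (t • x + (1 - t) • y) := by
    intro x y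
    rw [hρ]
    simp only
    rw [ENNReal.ofReal_rpow_of_pos (hρpos x), ENNReal.ofReal_rpow_of_pos (hρpos y),
      ← ENNReal.ofReal_mul (by positivity)]
    refine ENNReal.ofReal_le_ofReal ?_
    have hexp_rpow : ∀ (a s : ℝ), Real.exp a ^ s = Real.exp (a * s) := fun a s => by
      rw [Real.rpow_def_of_pos (Real.exp_pos a), Real.log_exp]
    rw [Real.mul_rpow hc₀pos.le (Real.exp_pos _).le,
      Real.mul_rpow hc₀pos.le (Real.exp_pos _).le, hexp_rpow, hexp_rpow]
    have hc₀c : c₀ ^ t * c₀ ^ (1 - t) = c₀ := by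
      rw [← Real.rpow_add hc₀pos]; norm_num
    calc c₀ ^ t * Real.exp (-(q x)/2 * t) * (c₀ ^ (1-t) * Real.exp (-(q y)/2 * (1-t)))
        = (c₀ ^ t * c₀ ^ (1-t)) * (Real.exp (-(q x)/2 * t) * Real.exp (-(q y)/2 * (1-t))) := by
          ring
      _ = c₀ * Real.exp (-(q x)/2 * t + -(q y)/2 * (1-t)) := by
          rw [hc₀c, ← Real.exp_add]
      _ ≤ c₀ * Real.exp (-(q (t • x + (1 - t) • y)) / 2) := by
          refine mul_le_mul_of_nonneg_left (Real.exp_le_exp.mpr ?_) hc₀pos.le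
          have := hqconv x y
          linarith
  -- the sets
  have hCmeas : MeasurableSet C := by
    rw [hC]
    have : {X : (Fin N × Fin n) → ℝ | ∀ k : Fin N, (fun i => X (k, i)) ∈
        (if (k : ℕ) = N - 1 then 𝒯 else 𝒮)} =
        ⋂ k : Fin N, (fun X : (Fin N × Fin n) → ℝ => fun i => X (k, i)) ⁻¹'
          (if (k : ℕ) = N - 1 then 𝒯 else 𝒮) := by
      ext X; simp [Set.mem_iInter]
    rw [this]
    refine MeasurableSet.iInter fun k => ?_
    refine MeasurableSet.preimage ?_ (measurable_pi_lambda _ fun i => measurable_pi_apply (k, i))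
    split_ifs
    · exact h𝒯meas
    · exact h𝒮meas
  have hCconv : Convex ℝ C := by
    rw [hC]
    intro X hX Y hY a b ha hb hab
    intro k
    have hXk := hX k
    have hYk := hY k
    have : (fun i => (a • X + b • Y) (k, i)) =
        a • (fun i => X (k, i)) + b • (fun i => Y (k, i)) := rfl
    rw [this]
    split_ifs with hk
    · rw [if_pos hk] at hXk hYk
      exact h𝒯conv hXk hYk ha hb hab
    · rw [if_neg hk] at hXk hYk
      exact h𝒮conv hXk hYk ha hb hab
  -- affine sections
  set S : (Fin N × Fin m → ℝ) → Set ((Fin N × Fin n) → ℝ) :=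
    fun U => {w | Abar.mulVec x₀ + Hbar.mulVec U + Gbar.mulVec w ∈ C} with hS
  have hmulVecm : Measurable fun w : (Fin N × Fin n) → ℝ => Gbar.mulVec w := by
    refine measurable_pi_lambda _ fun i => ?_
    have : Measurable fun w : (Fin N × Fin n) → ℝ => ∑ j : Fin N × Fin n, Gbar i j * w j :=
      Finset.measurable_sum _ fun j _ => (measurable_pi_apply j).const_mul _
    convert this using 1
    rfl
  have hSmeas : ∀ U, MeasurableSet (S U) := by
    intro U
    exact (measurable_const.add hmulVecm) hCmeas
  -- probability as an integral
  have hPeq : ∀ U, μ {ω | Abar.mulVec x₀ + Hbar.mulVec U + Gbar.mulVec (W ω) ∈ C} =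
      ∫⁻ w, (S U).indicator ρ w := by
    intro U
    have h1 : {ω | Abar.mulVec x₀ + Hbar.mulVec U + Gbar.mulVec (W ω) ∈ C} = W ⁻¹' (S U) := rfl
    rw [h1, ← Measure.map_apply hW (hSmeas U), hWgauss, withDensity_apply _ (hSmeas U),
      ← lintegral_indicator (hSmeas U)]
  have hPfin : ∀ U, (∫⁻ w, (S U).indicator ρ w) ≠ ⊤ := by
    intro U
    rw [← hPeq U]
    exact measure_ne_top μ _
  -- apply Prékopa–Leindler
  have hPL := plProp_pi (Fin N × Fin n) t ht ht1' ((S U₁).indicator ρ) ((S U₂).indicator ρ)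
    ((S (t • U₁ + (1 - t) • U₂)).indicator ρ)
    (hρm.indicator (hSmeas U₁)) (hρm.indicator (hSmeas U₂))
    (hρm.indicator (hSmeas _)) ?_
  · -- convert to the real-valued statement
    rw [hF U₁, hF U₂, hF (t • U₁ + (1 - t) • U₂), hPeq U₁, hPeq U₂, hPeq _]
    rw [ENNReal.toReal_rpow, ENNReal.toReal_rpow, ← ENNReal.toReal_mul]
    exact ENNReal.toReal_mono (hPfin _) hPL
  · -- the pointwise hypothesis
    intro x y
    by_cases hx : x ∈ S U₁
    · by_cases hy : y ∈ S U₂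
      · rw [Set.indicator_of_mem hx, Set.indicator_of_mem hy]
        have hz : t • x + (1 - t) • y ∈ S (t • U₁ + (1 - t) • U₂) := by
          show Abar.mulVec x₀ + Hbar.mulVec (t • U₁ + (1 - t) • U₂) +
            Gbar.mulVec (t • x + (1 - t) • y) ∈ C
          have he : Abar.mulVec x₀ + Hbar.mulVec (t • U₁ + (1 - t) • U₂) +
              Gbar.mulVec (t • x + (1 - t) • y) =
              t • (Abar.mulVec x₀ + Hbar.mulVec U₁ + Gbar.mulVec x) +
              (1 - t) • (Abar.mulVec x₀ + Hbar.mulVec U₂ + Gbar.mulVec y) := by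
            rw [Matrix.mulVec_add, Matrix.mulVec_add, Matrix.mulVec_smul, Matrix.mulVec_smul,
              Matrix.mulVec_smul, Matrix.mulVec_smul]
            module
          rw [he]
          exact hCconv hx hy ht.le ht1''.le (by ring)
        rw [Set.indicator_of_mem hz]
        exact hρlc x y
      · rw [Set.indicator_of_notMem hy, ENNReal.zero_rpow_of_pos ht1'', mul_zero]
        exact zero_le
    · rw [Set.indicator_of_notMem hx, ENNReal.zero_rpow_of_pos ht, zero_mul]
      exact zero_le
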